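/- arXiv:2112.09412 — 6 statements merged into one kernel-verified Lean document; each statement's English description precedes it below -/
import Mathlib

section
/- For real κ, u with u > 0 and 1 + 12κu > 0, let r₀(κ,u) = (−1 + √(1 + 12κu))/(6u) and r₂(κ,u) = u(−1 + √(1 + 12κu))/(1 + 12κu)². Define r₄(κ,u) := −u·(3·r₂² + r₂·∂²_κ r₀ + r₀·∂²_κ r₂ + (1/12)·r₀·∂⁴_κ r₀)/√(1 + 12κu), where ∂_κ denotes partial differentiation with respect to κ. Then r₄(κ,u) = 63u³·(−3 − 8κu + 3√(1 + 12κu))/(1 + 12κu)^{9/2}. -/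
open Real Filter Topology

namespace QuarticR4

lemma hasDerivAt_t (u k : ℝ) : HasDerivAt (fun k : ℝ => 1 + 12 * k * u) (12 * u) k := by
  have h : (fun k : ℝ => 1 + 12 * k * u) = fun k : ℝ => 1 + (12 * u) * k := by
    funext x; ring
  rw [h]
  simpa using ((hasDerivAt_id k).const_mul (12 * u)).const_add 1

lemma hasDerivAt_tp (u : ℝ) (p : ℝ) {k : ℝ} (hk : 0 < 1 + 12 * k * u) :
    HasDerivAt (fun k : ℝ => (1 + 12 * k * u) ^ p)
      (12 * u * (p * (1 + 12 * k * u) ^ (p - 1))) k := by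
  simpa [mul_assoc] using (hasDerivAt_t u k).rpow_const (p := p) (Or.inl hk.ne')

lemma eventually_pos {u κ : ℝ} (hκ : 0 < 1 + 12 * κ * u) :
    ∀ᶠ k in 𝓝 κ, 0 < 1 + 12 * k * u := by
  have hc : Continuous (fun k : ℝ => 1 + 12 * k * u) := by continuity
  have ho : IsOpen {k : ℝ | 0 < 1 + 12 * k * u} := isOpen_lt continuous_const hc
  exact ho.mem_nhds hκ

lemma hasDerivAt_F0 {u : ℝ} (hu : 0 < u) {k : ℝ} (hk : 0 < 1 + 12 * k * u) :
    HasDerivAt (fun k : ℝ => (-1 + Real.sqrt (1 + 12 * k * u)) / (6 * u))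
      ((1 + 12 * k * u) ^ (-(1:ℝ)/2)) k := by
  have h1 : (fun k : ℝ => (-1 + Real.sqrt (1 + 12 * k * u)) / (6 * u))
      = fun k : ℝ => (-1 + (1 + 12 * k * u) ^ ((1:ℝ)/2)) / (6 * u) := by
    funext x; rw [Real.sqrt_eq_rpow]
  rw [h1]
  have h2 := ((hasDerivAt_tp u (1/2) hk).const_add (-1)).div_const (6 * u)
  refine h2.congr_deriv ?_
  rw [show (1:ℝ)/2 - 1 = -(1:ℝ)/2 by norm_num]
  field_simp
  ring

lemma hasDerivAt_F1 (u : ℝ) {k : ℝ} (hk : 0 < 1 + 12 * k * u) :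
    HasDerivAt (fun k : ℝ => (1 + 12 * k * u) ^ (-(1:ℝ)/2))
      (-6 * u * (1 + 12 * k * u) ^ (-(3:ℝ)/2)) k := by
  have h2 := hasDerivAt_tp u (-(1:ℝ)/2) hk
  convert h2 using 1
  rw [show -(1:ℝ)/2 - 1 = -(3:ℝ)/2 by norm_num]
  ring

lemma hasDerivAt_F2 (u : ℝ) {k : ℝ} (hk : 0 < 1 + 12 * k * u) :
    HasDerivAt (fun k : ℝ => -6 * u * (1 + 12 * k * u) ^ (-(3:ℝ)/2))
      (108 * u^2 * (1 + 12 * k * u) ^ (-(5:ℝ)/2)) k := by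
  have h2 := (hasDerivAt_tp u (-(3:ℝ)/2) hk).const_mul (-6 * u)
  refine h2.congr_deriv ?_
  rw [show -(3:ℝ)/2 - 1 = -(5:ℝ)/2 by norm_num]
  ring

lemma hasDerivAt_F3 (u : ℝ) {k : ℝ} (hk : 0 < 1 + 12 * k * u) :
    HasDerivAt (fun k : ℝ => 108 * u^2 * (1 + 12 * k * u) ^ (-(5:ℝ)/2))
      (-3240 * u^3 * (1 + 12 * k * u) ^ (-(7:ℝ)/2)) k := by
  have h2 := (hasDerivAt_tp u (-(5:ℝ)/2) hk).const_mul (108 * u^2)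
  refine h2.congr_deriv ?_
  rw [show -(5:ℝ)/2 - 1 = -(7:ℝ)/2 by norm_num]
  ring

lemma G0_eq {u : ℝ} {k : ℝ} (hk : 0 < 1 + 12 * k * u) :
    u * (-1 + Real.sqrt (1 + 12 * k * u)) / (1 + 12 * k * u) ^ 2
      = u * ((1 + 12 * k * u) ^ (-(3:ℝ)/2) - (1 + 12 * k * u) ^ (-(2:ℝ))) := by
  set t := 1 + 12 * k * u with ht
  have h1 : t ^ (-(2:ℝ)) = (t ^ 2)⁻¹ := by
    rw [show (-(2:ℝ)) = -((2:ℕ):ℝ) by norm_num, Real.rpow_neg hk.le, Real.rpow_natCast]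
  have h2 : t ^ (-(3:ℝ)/2) = t ^ ((1:ℝ)/2) * (t ^ 2)⁻¹ := by
    rw [show (-(3:ℝ)/2) = (1:ℝ)/2 + (-((2:ℕ):ℝ)) by norm_num, Real.rpow_add hk,
      Real.rpow_neg hk.le, Real.rpow_natCast]
  clear_value t
  rw [h1, h2, ← Real.sqrt_eq_rpow]
  have h3 : (t:ℝ)^2 ≠ 0 := pow_ne_zero _ hk.ne'
  field_simp
  ring

lemma hasDerivAt_H0 (u : ℝ) {k : ℝ} (hk : 0 < 1 + 12 * k * u) :
    HasDerivAt (fun k : ℝ => u * ((1 + 12 * k * u) ^ (-(3:ℝ)/2) - (1 + 12 * k * u) ^ (-(2:ℝ))))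
      (-18 * u^2 * (1 + 12 * k * u) ^ (-(5:ℝ)/2) + 24 * u^2 * (1 + 12 * k * u) ^ (-(3:ℝ))) k := by
  have h2 := ((hasDerivAt_tp u (-(3:ℝ)/2) hk).sub (hasDerivAt_tp u (-(2:ℝ)) hk)).const_mul u
  refine h2.congr_deriv ?_
  rw [show -(3:ℝ)/2 - 1 = -(5:ℝ)/2 by norm_num, show -(2:ℝ) - 1 = -(3:ℝ) by norm_num]
  ring

lemma hasDerivAt_G1 (u : ℝ) {k : ℝ} (hk : 0 < 1 + 12 * k * u) :
    HasDerivAt (fun k : ℝ =>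
        -18 * u^2 * (1 + 12 * k * u) ^ (-(5:ℝ)/2) + 24 * u^2 * (1 + 12 * k * u) ^ (-(3:ℝ)))
      (540 * u^3 * (1 + 12 * k * u) ^ (-(7:ℝ)/2) - 864 * u^3 * (1 + 12 * k * u) ^ (-(4:ℝ))) k := by
  have h2 := ((hasDerivAt_tp u (-(5:ℝ)/2) hk).const_mul (-18 * u^2)).add
    ((hasDerivAt_tp u (-(3:ℝ)) hk).const_mul (24 * u^2))
  refine h2.congr_deriv ?_
  rw [show -(5:ℝ)/2 - 1 = -(7:ℝ)/2 by norm_num, show -(3:ℝ) - 1 = -(4:ℝ) by norm_num]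
  ring

/-- second derivative of r0 -/
lemma d2F0 {u : ℝ} (hu : 0 < u) {κ : ℝ} (hκ : 0 < 1 + 12 * κ * u) :
    deriv (deriv (fun k : ℝ => (-1 + Real.sqrt (1 + 12 * k * u)) / (6 * u))) κ
      = -6 * u * (1 + 12 * κ * u) ^ (-(3:ℝ)/2) := by
  have hev : deriv (fun k : ℝ => (-1 + Real.sqrt (1 + 12 * k * u)) / (6 * u))
      =ᶠ[𝓝 κ] fun k : ℝ => (1 + 12 * k * u) ^ (-(1:ℝ)/2) :=
    (eventually_pos hκ).mono fun x hx => (hasDerivAt_F0 hu hx).deriv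
  rw [hev.deriv_eq]
  exact (hasDerivAt_F1 u hκ).deriv

/-- third derivative of r0, as a pointwise statement -/
lemma d3F0 {u : ℝ} (hu : 0 < u) {κ : ℝ} (hκ : 0 < 1 + 12 * κ * u) :
    deriv (deriv (deriv (fun k : ℝ => (-1 + Real.sqrt (1 + 12 * k * u)) / (6 * u)))) κ
      = 108 * u^2 * (1 + 12 * κ * u) ^ (-(5:ℝ)/2) := by
  have hev : deriv (deriv (fun k : ℝ => (-1 + Real.sqrt (1 + 12 * k * u)) / (6 * u)))
      =ᶠ[𝓝 κ] fun k : ℝ => -6 * u * (1 + 12 * k * u) ^ (-(3:ℝ)/2) :=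
    (eventually_pos hκ).mono fun x hx => d2F0 hu hx
  rw [hev.deriv_eq]
  exact (hasDerivAt_F2 u hκ).deriv

lemma d4F0 {u : ℝ} (hu : 0 < u) {κ : ℝ} (hκ : 0 < 1 + 12 * κ * u) :
    deriv (deriv (deriv (deriv (fun k : ℝ => (-1 + Real.sqrt (1 + 12 * k * u)) / (6 * u))))) κ
      = -3240 * u^3 * (1 + 12 * κ * u) ^ (-(7:ℝ)/2) := by
  have hev : deriv (deriv (deriv (fun k : ℝ => (-1 + Real.sqrt (1 + 12 * k * u)) / (6 * u))))
      =ᶠ[𝓝 κ] fun k : ℝ => 108 * u^2 * (1 + 12 * k * u) ^ (-(5:ℝ)/2) :=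
    (eventually_pos hκ).mono fun x hx => d3F0 hu hx
  rw [hev.deriv_eq]
  exact (hasDerivAt_F3 u hκ).deriv

lemma d1G0 {u : ℝ} {κ : ℝ} (hκ : 0 < 1 + 12 * κ * u) :
    deriv (fun k : ℝ => u * (-1 + Real.sqrt (1 + 12 * k * u)) / (1 + 12 * k * u) ^ 2) κ
      = -18 * u^2 * (1 + 12 * κ * u) ^ (-(5:ℝ)/2) + 24 * u^2 * (1 + 12 * κ * u) ^ (-(3:ℝ)) := by
  have hev : (fun k : ℝ => u * (-1 + Real.sqrt (1 + 12 * k * u)) / (1 + 12 * k * u) ^ 2)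
      =ᶠ[𝓝 κ] fun k : ℝ => u * ((1 + 12 * k * u) ^ (-(3:ℝ)/2) - (1 + 12 * k * u) ^ (-(2:ℝ))) :=
    (eventually_pos hκ).mono fun x hx => G0_eq hx
  rw [hev.deriv_eq]
  exact (hasDerivAt_H0 u hκ).deriv

lemma d2G0 {u : ℝ} {κ : ℝ} (hκ : 0 < 1 + 12 * κ * u) :
    deriv (deriv (fun k : ℝ => u * (-1 + Real.sqrt (1 + 12 * k * u)) / (1 + 12 * k * u) ^ 2)) κ
      = 540 * u^3 * (1 + 12 * κ * u) ^ (-(7:ℝ)/2) - 864 * u^3 * (1 + 12 * κ * u) ^ (-(4:ℝ)) := by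
  have hev : deriv (fun k : ℝ => u * (-1 + Real.sqrt (1 + 12 * k * u)) / (1 + 12 * k * u) ^ 2)
      =ᶠ[𝓝 κ] fun k : ℝ =>
        -18 * u^2 * (1 + 12 * k * u) ^ (-(5:ℝ)/2) + 24 * u^2 * (1 + 12 * k * u) ^ (-(3:ℝ)) :=
    (eventually_pos hκ).mono fun x hx => d1G0 hx
  rw [hev.deriv_eq]
  exact (hasDerivAt_G1 u hκ).deriv

lemma sq_rpow_neg (s : ℝ) (hs : 0 < s) (q : ℝ) (n : ℕ) (hq : 2 * q = -(n:ℝ)) :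
    (s ^ 2) ^ q = (s ^ n)⁻¹ := by
  rw [← Real.rpow_natCast s 2, ← Real.rpow_mul hs.le]
  push_cast
  rw [hq, Real.rpow_neg hs.le, Real.rpow_natCast]

lemma sq_rpow_pos (s : ℝ) (hs : 0 < s) (q : ℝ) (n : ℕ) (hq : 2 * q = (n:ℝ)) :
    (s ^ 2) ^ q = s ^ n := by
  rw [← Real.rpow_natCast s 2, ← Real.rpow_mul hs.le]
  push_cast
  rw [hq, Real.rpow_natCast]

end QuarticR4

/-- For `u > 0` and `1 + 12κu > 0`, with `r₀(κ) = (-1 + √(1 + 12κu))/(6u)` and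
`r₂(κ) = u(-1 + √(1 + 12κu))/(1 + 12κu)²`, the genus-two coefficient
`r₄ := -u(3r₂² + r₂·∂²_κ r₀ + r₀·∂²_κ r₂ + (1/12)r₀·∂⁴_κ r₀)/√(1 + 12κu)` equals
`63u³(-3 - 8κu + 3√(1 + 12κu))/(1 + 12κu)^(9/2)`. -/
theorem quartic_string_equation_r4 (κ u : ℝ) (hu : 0 < u) (h : 0 < 1 + 12 * κ * u) :
    -u * (3 * ((fun k : ℝ => u * (-1 + Real.sqrt (1 + 12 * k * u)) / (1 + 12 * k * u) ^ 2) κ) ^ 2 +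
          ((fun k : ℝ => u * (-1 + Real.sqrt (1 + 12 * k * u)) / (1 + 12 * k * u) ^ 2) κ) *
            deriv (deriv (fun k : ℝ => (-1 + Real.sqrt (1 + 12 * k * u)) / (6 * u))) κ +
          ((fun k : ℝ => (-1 + Real.sqrt (1 + 12 * k * u)) / (6 * u)) κ) *
            deriv (deriv (fun k : ℝ => u * (-1 + Real.sqrt (1 + 12 * k * u)) / (1 + 12 * k * u) ^ 2)) κ +
          (1 / 12) * ((fun k : ℝ => (-1 + Real.sqrt (1 + 12 * k * u)) / (6 * u)) κ) *
            deriv (deriv (deriv (deriv (fun k : ℝ => (-1 + Real.sqrt (1 + 12 * k * u)) / (6 * u))))) κ) /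
        Real.sqrt (1 + 12 * κ * u) =
      63 * u ^ 3 * (-3 - 8 * κ * u + 3 * Real.sqrt (1 + 12 * κ * u)) /
        (1 + 12 * κ * u) ^ ((9 : ℝ) / 2) := by
  rw [QuarticR4.d2F0 hu h, QuarticR4.d4F0 hu h, QuarticR4.d2G0 h]
  simp only
  set s := Real.sqrt (1 + 12 * κ * u) with hsdef
  have hs0 : 0 < s := Real.sqrt_pos.2 h
  have hs2 : s ^ 2 = 1 + 12 * κ * u := Real.sq_sqrt h.le
  rw [← hs2]
  rw [QuarticR4.sq_rpow_neg s hs0 (-(3:ℝ)/2) 3 (by norm_num),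
    QuarticR4.sq_rpow_neg s hs0 (-(7:ℝ)/2) 7 (by norm_num),
    QuarticR4.sq_rpow_neg s hs0 (-(4:ℝ)) 8 (by norm_num),
    QuarticR4.sq_rpow_pos s hs0 ((9:ℝ)/2) 9 (by norm_num)]
  have hk : κ = (s ^ 2 - 1) / (12 * u) := by
    field_simp
    linarith
  rw [hk]
  field_simp
  ring
end

section
/- Define sequences a : ℕ → ℝ and C : ℕ → ℝ by a₀ = 1, a_{k+1} = ((25k² − 1)/(8√6))·a_k − (1/2)·Σ_{m=1}^{k} a_m·a_{k+1−m} for k ≥ 0, and C₀ = −4√3, C_g = (1/(8√3))·Σ_{ℓ=1}^{g−1} C_{g−ℓ}·C_ℓ + ((5g−6)(5g−4)/(256·3^{7/2}))·C_{g−1} for g ≥ 1. Then for all g ≥ 0, C_g = −4√3 · 2^{−9g/2} · 3^{−3g} · a_g. -/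
noncomputable def fB (x : ℝ) : ℝ := (2:ℝ)^(-(9:ℝ)*x/2) * (3:ℝ)^(-(3:ℝ)*x)

lemma fB_add (x y : ℝ) : fB (x+y) = fB x * fB y := by
  unfold fB
  rw [show -(9:ℝ)*(x+y)/2 = -(9:ℝ)*x/2 + -(9:ℝ)*y/2 by ring,
     show -(3:ℝ)*(x+y) = -(3:ℝ)*x + -(3:ℝ)*y by ring,
     Real.rpow_add two_pos, Real.rpow_add (by norm_num)]
  ring

lemma fB_zero : fB 0 = 1 := by simp [fB]

lemma fB_one : fB 1 = Real.sqrt 6 / (32 * (3:ℝ)^((7:ℝ)/2)) := by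
  unfold fB
  rw [Real.sqrt_eq_rpow, show (6:ℝ) = 2*3 by norm_num,
    Real.mul_rpow (by norm_num) (by norm_num),
    show (32:ℝ) = (2:ℝ)^((5:ℝ)) by
      rw [show (5:ℝ) = ((5:ℕ):ℝ) by norm_num, Real.rpow_natCast]; norm_num,
    eq_div_iff (by positivity),
    show ((2:ℝ)^(-(9:ℝ)*1/2) * (3:ℝ)^(-(3:ℝ)*1)) * ((2:ℝ)^((5:ℝ)) * (3:ℝ)^((7:ℝ)/2))
      = ((2:ℝ)^(-(9:ℝ)*1/2) * (2:ℝ)^((5:ℝ))) * ((3:ℝ)^(-(3:ℝ)*1) * (3:ℝ)^((7:ℝ)/2)) by ring,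
    ← Real.rpow_add two_pos, ← Real.rpow_add (by norm_num : (0:ℝ)<3)]
  norm_num

/-- The constants `C_g` (the `𝒞_{2g}` of the quartic matrix model) defined by the
quadratic recursion with `C₀ = -4√3` coincide with the rescaled coefficients
`a_g` of the asymptotic expansion of the Boutroux tronquée solutions of
Painlevé I: `C_g = -4√3 · 2^(-9g/2) · 3^(-3g) · a_g`. -/
theorem C2g_equals_rescaled_boutroux (a C : ℕ → ℝ)
    (ha0 : a 0 = 1)
    (ha : ∀ k : ℕ, a (k + 1) =
      ((25 * (k : ℝ) ^ 2 - 1) / (8 * Real.sqrt 6)) * a k -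
        (1 / 2) * ∑ m ∈ Finset.Icc 1 k, a m * a (k + 1 - m))
    (hC0 : C 0 = -4 * Real.sqrt 3)
    (hC : ∀ g : ℕ, 1 ≤ g → C g =
      (1 / (8 * Real.sqrt 3)) * ∑ ℓ ∈ Finset.Icc 1 (g - 1), C (g - ℓ) * C ℓ +
        ((5 * (g : ℝ) - 6) * (5 * (g : ℝ) - 4) / (256 * (3 : ℝ) ^ ((7 : ℝ) / 2))) * C (g - 1)) :
    ∀ g : ℕ, C g =
      -4 * Real.sqrt 3 * (2 : ℝ) ^ (-(9 : ℝ) * (g : ℝ) / 2) * (3 : ℝ) ^ (-(3 : ℝ) * (g : ℝ)) * a g := by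
  have h3 : Real.sqrt 3 * Real.sqrt 3 = 3 := Real.mul_self_sqrt (by norm_num)
  have h3pos : (0:ℝ) < Real.sqrt 3 := Real.sqrt_pos.mpr (by norm_num)
  have h6pos : (0:ℝ) < Real.sqrt 6 := Real.sqrt_pos.mpr (by norm_num)
  have hTpos : (0:ℝ) < (3:ℝ)^((7:ℝ)/2) := Real.rpow_pos_of_pos (by norm_num) _
  have key : ∀ g : ℕ, C g = -4 * Real.sqrt 3 * fB g * a g := by
    intro g
    induction g using Nat.strong_induction_on with
    | _ g IH =>
      match g with
      | 0 => simp [hC0, ha0, fB_zero]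
      | (k+1) =>
        have hsum : ∀ ℓ ∈ Finset.Icc 1 k, C (k+1-ℓ) * C ℓ
            = 48 * fB ((k:ℝ)+1) * (a ℓ * a (k+1-ℓ)) := by
          intro ℓ hℓ
          obtain ⟨hl1, hl2⟩ := Finset.mem_Icc.mp hℓ
          rw [IH (k+1-ℓ) (by omega), IH ℓ (by omega)]
          have hcast : ((k+1-ℓ : ℕ):ℝ) = ((k:ℝ)+1-(ℓ:ℝ)) := by
            have : (k+1-ℓ : ℕ) = (k+1) - ℓ := rfl
            rw [this, Nat.cast_sub (by omega)]
            push_cast; ring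
          rw [hcast]
          have hmul : fB ((k:ℝ)+1-ℓ) * fB ℓ = fB ((k:ℝ)+1) := by
            rw [← fB_add]; ring_nf
          linear_combination (48 * (a ℓ * a (k+1-ℓ))) * hmul
            + (16 * fB ((k:ℝ)+1-ℓ) * fB (ℓ:ℝ) * a ℓ * a (k+1-ℓ)) * h3
        have hCk := hC (k+1) (by omega)
        simp only [Nat.add_sub_cancel] at hCk
        rw [hCk, Finset.sum_congr rfl hsum, ← Finset.mul_sum,
          IH k (by omega), ha k]
        have hfk1 : fB ((k:ℝ)+1) = fB k * (Real.sqrt 6 / (32 * (3:ℝ)^((7:ℝ)/2))) := by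
          rw [fB_add, fB_one]
        push_cast
        rw [hfk1]
        have h6 : Real.sqrt 6 * Real.sqrt 6 = 6 := Real.mul_self_sqrt (by norm_num)
        field_simp
        linear_combination (-8192 * fB (k:ℝ) * Real.sqrt 6 *
          (∑ i ∈ Finset.Icc 1 k, a i * a (k + 1 - i))) * h3
  intro g
  rw [key g]; unfold fB; ring
end

section
/- For every real u with −1/12 < u < 1/12 and u ≠ 0, the series Σ_{j=0}^{∞} (−1)^{j+1}·3^{j+1}·(2j+1)!/(j!·(j+3)!)·u^j converges and its sum equals (−1 − 18u + (1 + 12u)^{3/2})/(216u³) − 1/(4u). -/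
noncomputable def bc (a : ℝ) : ℕ → ℝ
  | 0 => 1
  | k + 1 => bc a k * (a - k) / (k + 1)

lemma bc_succ (a : ℝ) (k : ℕ) : bc a (k + 1) = bc a k * (a - k) / (k + 1) := rfl

lemma summable_bc_aux (a r : ℝ) (hr0 : 0 < r) (hr1 : r < 1) :
    Summable (fun k : ℕ => |bc a k| * k * r ^ (k - 1)) := by
  set l : ℝ := (1 + r) / 2 with hl
  have hrl : r < l := by rw [hl]; linarith
  have hl1 : l < 1 := by rw [hl]; linarith
  apply summable_of_ratio_norm_eventually_le hl1
  filter_upwards [Filter.eventually_atTop.2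
    ⟨max 1 ⌈|a| * r / (l - r)⌉₊, fun k hk => hk⟩] with k hk
  have hk1 : 1 ≤ k := le_trans (le_max_left _ _) hk
  have hk2 : (⌈|a| * r / (l - r)⌉₊ : ℝ) ≤ k := by
    exact_mod_cast le_trans (le_max_right _ _) hk
  have hk3 : |a| * r / (l - r) ≤ (k : ℝ) := le_trans (Nat.le_ceil _) hk2
  have hk4 : |a| * r ≤ (l - r) * k := by
    rw [div_le_iff₀ (by linarith)] at hk3; linarith
  have hb : |bc a (k + 1)| * ((k + 1 : ℕ) : ℝ) = |bc a k| * |a - k| := by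
    rw [bc_succ, abs_div, abs_mul, abs_of_pos (by positivity : (0:ℝ) < ((k:ℝ) + 1))]
    push_cast
    field_simp
  have hpow : r ^ (k + 1 - 1) = r * r ^ (k - 1) := by
    rw [Nat.add_sub_cancel, ← pow_succ']
    congr 1
    omega
  rw [Real.norm_of_nonneg (by positivity), Real.norm_of_nonneg (by positivity)]
  have habs : |a - (k:ℝ)| ≤ |a| + k := by
    have h := abs_add_le a (-(k:ℝ))
    rw [abs_neg, abs_of_nonneg (by positivity : (0:ℝ) ≤ (k:ℝ))] at h
    simpa [sub_eq_add_neg] using h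
  have key : |a - (k:ℝ)| * r ≤ l * k := by
    calc |a - (k:ℝ)| * r ≤ (|a| + k) * r := by nlinarith [abs_nonneg (a - (k:ℝ))]
    _ ≤ l * k := by nlinarith
  calc |bc a (k + 1)| * ((k + 1 : ℕ) : ℝ) * r ^ (k + 1 - 1)
      = (|a - (k:ℝ)| * r) * (|bc a k| * r ^ (k - 1)) := by rw [hb, hpow]; ring
  _ ≤ (l * k) * (|bc a k| * r ^ (k - 1)) :=
      mul_le_mul_of_nonneg_right key (by positivity)
  _ = l * (|bc a k| * k * r ^ (k - 1)) := by ring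




lemma binom_hasSum (a x : ℝ) (hx : |x| < 1) :
    HasSum (fun k : ℕ => bc a k * x ^ k) ((1 + x) ^ a) := by
  set r : ℝ := (|x| + 1) / 2 with hrdef
  have hax : 0 ≤ |x| := abs_nonneg x
  have hr0 : 0 < r := by rw [hrdef]; linarith
  have hr1 : r < 1 := by rw [hrdef]; linarith
  have hxr : |x| < r := by rw [hrdef]; linarith
  have ht : IsOpen (Set.Ioo (-r) r) := isOpen_Ioo
  have h't : IsPreconnected (Set.Ioo (-r) r) := (convex_Ioo _ _).isPreconnected
  have h0t : (0:ℝ) ∈ Set.Ioo (-r) r := ⟨by linarith, hr0⟩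
  have hxt : x ∈ Set.Ioo (-r) r := by
    constructor
    · have := neg_abs_le x; linarith
    · have := le_abs_self x; linarith
  set g : ℕ → ℝ → ℝ := fun k y => bc a k * y ^ k with hgdef
  set g' : ℕ → ℝ → ℝ := fun k y => bc a k * (k * y ^ (k - 1)) with hg'def
  set v : ℕ → ℝ := fun k => |bc a k| * k * r ^ (k - 1) with hvdef
  have hv : Summable v := summable_bc_aux a r hr0 hr1
  have hg : ∀ (k : ℕ) (y : ℝ), y ∈ Set.Ioo (-r) r → HasDerivAt (g k) (g' k y) y :=
    fun k y _ => (hasDerivAt_pow k y).const_mul (bc a k)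
  have hg' : ∀ (k : ℕ) (y : ℝ), y ∈ Set.Ioo (-r) r → ‖g' k y‖ ≤ v k := by
    intro k y hy
    have hya : |y| ≤ r := le_of_lt (abs_lt.2 ⟨hy.1, hy.2⟩)
    have : ‖g' k y‖ = |bc a k| * k * |y| ^ (k - 1) := by
      rw [hg'def, Real.norm_eq_abs, abs_mul, abs_mul, abs_pow,
        Nat.abs_cast, mul_assoc]
    rw [this, hvdef]
    exact mul_le_mul_of_nonneg_left (pow_le_pow_left₀ (abs_nonneg y) hya _)
      (by positivity)
  have hg0 : Summable (fun k => g k 0) := by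
    apply summable_of_ne_finset_zero (s := {0})
    intro k hk
    simp only [Finset.mem_singleton] at hk
    simp [hgdef, zero_pow hk]
  have hsum : ∀ y ∈ Set.Ioo (-r) r, Summable (fun k => g k y) := fun y hy =>
    summable_of_summable_hasDerivAt_of_isPreconnected hv ht h't hg hg' h0t hg0 hy
  have hderiv : ∀ y ∈ Set.Ioo (-r) r,
      HasDerivAt (fun z => ∑' k, g k z) (∑' k, g' k y) y := fun y hy =>
    hasDerivAt_tsum_of_isPreconnected hv ht h't hg hg' h0t hg0 hy
  set F : ℝ → ℝ := fun z => ∑' k, g k z with hFdef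
  have hode : ∀ y ∈ Set.Ioo (-r) r, (1 + y) * (∑' k, g' k y) = a * F y := by
    intro y hy
    have Sg : Summable (fun k => g k y) := hsum y hy
    have Sg' : Summable (fun k => g' k y) :=
      Summable.of_norm_bounded hv (fun k => hg' k y hy)
    have e1 : ∀ k : ℕ, g' (k + 1) y = (a - k) * bc a k * y ^ k := by
      intro k
      have hk1 : ((k:ℝ) + 1) ≠ 0 := by positivity
      simp only [hg'def, bc_succ, Nat.add_sub_cancel]
      push_cast
      field_simp
    have hshift : (∑' k, g' k y) = ∑' k, (a - k) * bc a k * y ^ k := by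
      rw [Summable.tsum_eq_zero_add Sg']
      have e0 : g' 0 y = 0 := by simp [hg'def]
      rw [e0, zero_add]
      exact tsum_congr e1
    have S1 : Summable (fun k : ℕ => (a - k) * bc a k * y ^ k) :=
      ((summable_nat_add_iff 1).2 Sg').congr e1
    have e2 : ∀ k : ℕ, y * g' k y = (k : ℝ) * bc a k * y ^ k := by
      intro k
      cases k with
      | zero => simp [hg'def]
      | succ n =>
        simp only [hg'def, Nat.add_sub_cancel]
        push_cast
        ring
    have S2 : Summable (fun k : ℕ => (k : ℝ) * bc a k * y ^ k) :=
      (Sg'.mul_left y).congr e2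
    have h2 : y * (∑' k, g' k y) = ∑' k : ℕ, (k : ℝ) * bc a k * y ^ k := by
      rw [← tsum_mul_left]
      exact tsum_congr e2
    have h3 : (∑' k, (a - k) * bc a k * y ^ k) + (∑' k : ℕ, (k : ℝ) * bc a k * y ^ k)
        = ∑' k, a * (bc a k * y ^ k) := by
      rw [← Summable.tsum_add S1 S2]
      exact tsum_congr (fun k => by ring)
    calc (1 + y) * (∑' k, g' k y)
        = (∑' k, g' k y) + y * (∑' k, g' k y) := by ring
      _ = (∑' k, (a - k) * bc a k * y ^ k) + (∑' k : ℕ, (k : ℝ) * bc a k * y ^ k) := by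
          rw [h2, hshift]
      _ = ∑' k, a * (bc a k * y ^ k) := h3
      _ = a * F y := by rw [tsum_mul_left]
  have hderivh : ∀ y ∈ Set.Ioo (-r) r,
      HasDerivAt (fun z => F z * (1 + z) ^ (-a)) 0 y := by
    intro y hy
    have h1y : 0 < 1 + y := by
      have := hy.1
      have : -r < y := this
      linarith
    have dF := hderiv y hy
    have dp : HasDerivAt (fun z : ℝ => (1 + z) ^ (-a)) (-a * (1 + y) ^ (-a - 1)) y := by
      have h := Real.hasDerivAt_rpow_const (x := 1 + y) (p := -a) (Or.inl h1y.ne')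
      have hc : HasDerivAt (fun z : ℝ => 1 + z) 1 y := by
        simpa using (hasDerivAt_id y).const_add (1:ℝ)
      have := h.comp y hc
      rw [mul_one] at this
      exact this
    have hmul := dF.mul dp
    refine hmul.congr_deriv (Eq.symm ?_)
    have e : (1 + y) ^ (-a) = (1 + y) * (1 + y) ^ (-a - 1) := by
      have h := Real.rpow_add h1y 1 (-a - 1)
      rw [Real.rpow_one, show (1:ℝ) + (-a - 1) = -a by ring] at h
      exact h
    rw [e]
    have hOde := hode y hy
    linear_combination (-(1 + y) ^ (-a - 1)) * hOde
  have hconst := fun (y : ℝ) (hy : y ∈ Set.Ioo (-r) r) =>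
    Convex.norm_image_sub_le_of_norm_hasDerivWithin_le
      (f := fun z => F z * (1 + z) ^ (-a)) (f' := fun _ => (0:ℝ)) (C := 0)
      (fun z hz => (hderivh z hz).hasDerivWithinAt) (fun z _ => by simp)
      (convex_Ioo _ _) h0t hy
  have hF0 : F 0 = 1 := by
    have : F 0 = ∑' k, g k 0 := rfl
    rw [this, tsum_eq_single 0 (fun k hk => by simp [hgdef, zero_pow hk])]
    show bc a 0 * (0:ℝ) ^ 0 = 1
    norm_num [bc]
  have hx1 : 0 < 1 + x := by
    have := neg_abs_le x; linarith
  have hFx : F x = (1 + x) ^ a := by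
    have hcx := hconst x hxt
    rw [zero_mul, norm_le_zero_iff, sub_eq_zero] at hcx
    rw [hF0, one_mul, show (1:ℝ) + 0 = 1 by norm_num, Real.one_rpow] at hcx
    have hone : F x * (1 + x) ^ (-a) = 1 := hcx
    · have hinv : (1 + x) ^ (-a) * (1 + x) ^ a = 1 := by
        rw [← Real.rpow_add hx1]
        simp
      calc F x = F x * ((1 + x) ^ (-a) * (1 + x) ^ a) := by rw [hinv, mul_one]
        _ = (F x * (1 + x) ^ (-a)) * (1 + x) ^ a := by ring
        _ = (1 + x) ^ a := by rw [hone, one_mul]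
  have := (hsum x hxt).hasSum
  rw [show (∑' k, g k x) = F x from rfl, hFx] at this
  exact this

lemma coeff_id (j : ℕ) : bc (3/2) (j + 3) * 12 ^ (j + 3) =
    (-1 : ℝ) ^ (j + 1) * 3 ^ (j + 1) * (Nat.factorial (2 * j + 1) : ℝ) /
      ((Nat.factorial j : ℝ) * (Nat.factorial (j + 3) : ℝ)) * 216 := by
  induction j with
  | zero => norm_num [bc, Nat.factorial]
  | succ n ih =>
    have hnf : ((Nat.factorial n : ℝ)) ≠ 0 := Nat.cast_ne_zero.2 n.factorial_ne_zero
    have hnf3 : ((Nat.factorial (n + 3) : ℝ)) ≠ 0 := Nat.cast_ne_zero.2 (n + 3).factorial_ne_zero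
    have hb : bc (3/2 : ℝ) (n + 1 + 3) = bc (3/2) (n + 3) * ((3 : ℝ)/2 - ((n : ℝ) + 3)) / ((n : ℝ) + 4) := by
      rw [show n + 1 + 3 = (n + 3) + 1 from rfl, bc_succ]
      push_cast; ring
    have hbn : bc (3/2 : ℝ) (n + 3) =
        (-1 : ℝ) ^ (n + 1) * 3 ^ (n + 1) * (Nat.factorial (2 * n + 1) : ℝ) /
          ((Nat.factorial n : ℝ) * (Nat.factorial (n + 3) : ℝ)) * 216 / 12 ^ (n + 3) := by
      rw [eq_div_iff (by positivity : ((12 : ℝ)) ^ (n + 3) ≠ 0)]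
      exact ih
    have hf1 : (Nat.factorial (2 * (n + 1) + 1) : ℝ)
        = ((2 * n : ℝ) + 3) * ((2 * n : ℝ) + 2) * (Nat.factorial (2 * n + 1) : ℝ) := by
      rw [show 2 * (n + 1) + 1 = (2 * n + 1) + 1 + 1 by ring, Nat.factorial_succ, Nat.factorial_succ]
      push_cast; ring
    have hf2 : (Nat.factorial (n + 1) : ℝ) = ((n : ℝ) + 1) * (Nat.factorial n : ℝ) := by
      rw [Nat.factorial_succ]; push_cast; ring
    have hf3 : (Nat.factorial (n + 1 + 3) : ℝ) = ((n : ℝ) + 4) * (Nat.factorial (n + 3) : ℝ) := by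
      rw [show n + 1 + 3 = (n + 3) + 1 from rfl, Nat.factorial_succ]; push_cast; ring
    rw [hb, hbn, hf1, hf2, hf3]
    have h4 : ((n : ℝ) + 4) ≠ 0 := by positivity
    have h1 : ((n : ℝ) + 1) ≠ 0 := by positivity
    field_simp
    ring


/-- Power series of the genus-zero free-energy derivative `ℰ₀` of the quartic
matrix model: for `-1/12 < u < 1/12`, `u ≠ 0`,
`Σ_{j≥0} (-1)^(j+1) 3^(j+1) (2j+1)!/(j!(j+3)!) u^j
  = (-1 - 18u + (1 + 12u)^(3/2))/(216u³) - 1/(4u)`. -/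
theorem genus_zero_free_energy_series (u : ℝ)
    (h1 : -1 / 12 < u) (h2 : u < 1 / 12) (hu : u ≠ 0) :
    HasSum
      (fun j : ℕ => (-1 : ℝ) ^ (j + 1) * 3 ^ (j + 1) * (Nat.factorial (2 * j + 1) : ℝ) /
        ((Nat.factorial j : ℝ) * (Nat.factorial (j + 3) : ℝ)) * u ^ j)
      ((-1 - 18 * u + (1 + 12 * u) ^ ((3 : ℝ) / 2)) / (216 * u ^ 3) - 1 / (4 * u)) := by
  have hs := binom_hasSum (3/2) (12 * u) (abs_lt.2 ⟨by linarith, by linarith⟩)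
  set f : ℕ → ℝ := fun k => bc (3/2) k * (12 * u) ^ k with hfdef
  set S : ℝ := (1 + 12 * u) ^ ((3 : ℝ)/2) with hSdef
  have hsum3 : ∑ i ∈ Finset.range 3, f i = 1 + 18 * u + 54 * u ^ 2 := by
    rw [Finset.sum_range_succ, Finset.sum_range_succ, Finset.sum_range_one]
    simp only [hfdef]
    norm_num [bc]
    ring
  have h3 : HasSum (fun j => f (j + 3)) (S - (1 + 18 * u + 54 * u ^ 2)) := by
    rw [← hsum3]
    apply (hasSum_nat_add_iff 3).2
    rwa [sub_add_cancel]
  have h4 := h3.div_const (216 * u ^ 3)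
  have hterm : ∀ j : ℕ, f (j + 3) / (216 * u ^ 3) =
      (-1 : ℝ) ^ (j + 1) * 3 ^ (j + 1) * (Nat.factorial (2 * j + 1) : ℝ) /
        ((Nat.factorial j : ℝ) * (Nat.factorial (j + 3) : ℝ)) * u ^ j := by
    intro j
    have hfe : f (j + 3) = bc (3/2) (j + 3) * 12 ^ (j + 3) * u ^ (j + 3) := by
      simp only [hfdef, mul_pow]; ring
    rw [hfe, coeff_id j]
    have hup : u ^ (j + 3) = u ^ j * u ^ 3 := pow_add u j 3
    have hu3 : u ^ 3 ≠ 0 := pow_ne_zero 3 hu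
    have hfj : ((Nat.factorial j : ℝ)) ≠ 0 := Nat.cast_ne_zero.2 j.factorial_ne_zero
    have hfj3 : ((Nat.factorial (j + 3) : ℝ)) ≠ 0 := Nat.cast_ne_zero.2 (j + 3).factorial_ne_zero
    rw [hup]
    field_simp
  rw [show (fun j => f (j + 3) / (216 * u ^ 3)) =
      (fun j : ℕ => (-1 : ℝ) ^ (j + 1) * 3 ^ (j + 1) * (Nat.factorial (2 * j + 1) : ℝ) /
        ((Nat.factorial j : ℝ) * (Nat.factorial (j + 3) : ℝ)) * u ^ j) from funext hterm] at h4
  have hval : (S - (1 + 18 * u + 54 * u ^ 2)) / (216 * u ^ 3)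
      = (-1 - 18 * u + S) / (216 * u ^ 3) - 1 / (4 * u) := by
    field_simp
    ring
  rw [hval] at h4
  exact h4
end

section
/- For every real u with −1/12 < u < 1/12 and u ≠ 0, the series (1/2)·Σ_{j=0}^{∞} (−1)^{j+1}·12^j·(1 − (2j+2)!/(4^{j+1}·((j+1)!)²))·u^j converges and its sum equals (1 − √(1 + 12u))/(24u·(1 + 12u)). -/
open Finset

private lemma cb_sym (n : ℕ) :
    2 * ∑ k ∈ range (n+1), (k : ℝ) * Nat.centralBinom k * Nat.centralBinom (n-k)
      = n * ∑ k ∈ range (n+1), (Nat.centralBinom k : ℝ) * Nat.centralBinom (n-k) := by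
  have h := Finset.sum_range_reflect
    (fun k => (k : ℝ) * Nat.centralBinom k * Nat.centralBinom (n-k)) (n+1)
  simp only [Nat.add_sub_cancel] at h
  have h2 : ∑ j ∈ range (n+1), ((n - j : ℕ) : ℝ) * Nat.centralBinom (n-j) *
      Nat.centralBinom (n - (n - j)) =
      ∑ j ∈ range (n+1), ((n : ℝ) - j) * (Nat.centralBinom (n-j) : ℝ) * Nat.centralBinom j := by
    refine Finset.sum_congr rfl fun j hj => ?_
    have hjn : j ≤ n := Nat.lt_succ_iff.mp (mem_range.mp hj)
    rw [Nat.sub_sub_self hjn, Nat.cast_sub hjn]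
  rw [h2] at h
  calc 2 * ∑ k ∈ range (n+1), (k : ℝ) * Nat.centralBinom k * Nat.centralBinom (n-k)
      = (∑ k ∈ range (n+1), (k : ℝ) * Nat.centralBinom k * Nat.centralBinom (n-k))
        + ∑ j ∈ range (n+1), ((n : ℝ) - j) * (Nat.centralBinom (n-j) : ℝ) * Nat.centralBinom j := by
        rw [h]; ring
    _ = n * ∑ k ∈ range (n+1), (Nat.centralBinom k : ℝ) * Nat.centralBinom (n-k) := by
        rw [← Finset.sum_add_distrib, Finset.mul_sum]
        refine Finset.sum_congr rfl fun j hj => ?_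
        ring

private lemma cb_conv (n : ℕ) :
    ∑ k ∈ range (n+1), (Nat.centralBinom k : ℝ) * Nat.centralBinom (n-k) = 4 ^ n := by
  induction n with
  | zero => simp [Nat.centralBinom]
  | succ n ih =>
    -- A := ∑_{k ∈ range (n+2)} k * c k * c (n+1-k)
    have hA1 : ∑ k ∈ range (n+2), (k : ℝ) * Nat.centralBinom k * Nat.centralBinom (n+1-k)
        = ∑ i ∈ range (n+1), ((i:ℝ)+1) * Nat.centralBinom (i+1) * Nat.centralBinom (n-i) := by
      rw [Finset.sum_range_succ']
      simp
    have hrec : ∀ i : ℕ, ((i:ℝ)+1) * Nat.centralBinom (i+1) = (4*i+2) * Nat.centralBinom i := by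
      intro i
      have := Nat.succ_mul_centralBinom_succ i
      have h2 : ((i+1) * Nat.centralBinom (i+1) : ℝ) = (2 * (2*i+1) * Nat.centralBinom i : ℝ) := by
        exact_mod_cast congrArg (Nat.cast : ℕ → ℝ) this
      push_cast at h2
      nlinarith [h2]
    have hA2 : ∑ i ∈ range (n+1), ((i:ℝ)+1) * Nat.centralBinom (i+1) * Nat.centralBinom (n-i)
        = (2*n+2) * ∑ k ∈ range (n+1), (Nat.centralBinom k : ℝ) * Nat.centralBinom (n-k) := by
      have e1 : ∀ i ∈ range (n+1), ((i:ℝ)+1) * Nat.centralBinom (i+1) * Nat.centralBinom (n-i)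
          = 4 * ((i:ℝ) * Nat.centralBinom i * Nat.centralBinom (n-i))
            + 2 * ((Nat.centralBinom i : ℝ) * Nat.centralBinom (n-i)) := by
        intro i _
        rw [hrec i]; ring
      rw [Finset.sum_congr rfl e1, Finset.sum_add_distrib, ← Finset.mul_sum, ← Finset.mul_sum]
      have := cb_sym n
      nlinarith [this]
    have hsym := cb_sym (n+1)
    -- hsym : 2 * A = (n+1) * T(n+1)
    rw [hA1, hA2, ih] at hsym
    push_cast at hsym
    have hn : ((n:ℝ)+1) ≠ 0 := by positivity
    have key : ((n:ℝ)+1) * (∑ k ∈ range (n+1+1), (Nat.centralBinom k : ℝ) * Nat.centralBinom (n+1-k))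
        = ((n:ℝ)+1) * 4 ^ (n+1) := by
      rw [pow_succ]
      linear_combination -hsym
    have := mul_left_cancel₀ hn key
    exact_mod_cast this

private lemma cb_le (n : ℕ) : (Nat.centralBinom n : ℝ) ≤ 4 ^ n := by
  have h : Nat.centralBinom n ≤ 4 ^ n := by
    calc Nat.centralBinom n = (2*n).choose n := rfl
      _ ≤ ∑ m ∈ range (2*n+1), (2*n).choose m :=
          Finset.single_le_sum (fun i _ => Nat.zero_le _) (mem_range.mpr (by omega))
      _ = 2 ^ (2*n) := Nat.sum_range_choose (2*n)
      _ = 4 ^ n := by rw [pow_mul]; norm_num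
  exact_mod_cast h

private lemma cb_succ_le (n : ℕ) : (Nat.centralBinom (n+1) : ℝ) ≤ 4 * Nat.centralBinom n := by
  have h : Nat.centralBinom (n+1) ≤ 4 * Nat.centralBinom n := by
    have h1 := Nat.succ_mul_centralBinom_succ n
    have h2 : (n+1) * Nat.centralBinom (n+1) ≤ (n+1) * (4 * Nat.centralBinom n) := by
      rw [h1]; nlinarith [Nat.centralBinom_pos n]
    exact Nat.le_of_mul_le_mul_left h2 (Nat.succ_pos n)
  exact_mod_cast h

private lemma cb_hasSum {x : ℝ} (hx : |x| < 1) :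
    HasSum (fun n : ℕ => (Nat.centralBinom n : ℝ) / 4 ^ n * x ^ n)
      (Real.sqrt (1 - x))⁻¹ := by
  set b : ℕ → ℝ := fun n => (Nat.centralBinom n : ℝ) / 4 ^ n * x ^ n with hb_def
  have hnorm : Summable fun n => ‖b n‖ := by
    refine Summable.of_nonneg_of_le (fun n => norm_nonneg _) (fun n => ?_)
      (summable_geometric_of_lt_one (abs_nonneg x) hx)
    have h1 : ‖b n‖ = (Nat.centralBinom n : ℝ) / 4 ^ n * |x| ^ n := by
      rw [Real.norm_eq_abs, abs_mul, abs_pow]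
      congr 1
      rw [abs_of_nonneg (by positivity)]
    rw [h1]
    have h2 : (Nat.centralBinom n : ℝ) / 4 ^ n ≤ 1 := by
      rw [div_le_one (by positivity)]; exact cb_le n
    calc (Nat.centralBinom n : ℝ) / 4 ^ n * |x| ^ n ≤ 1 * |x| ^ n := by
          apply mul_le_mul_of_nonneg_right h2 (by positivity)
      _ = |x| ^ n := one_mul _
  have hb : Summable b := hnorm.of_norm
  set S : ℝ := ∑' n, b n with hS_def
  have hS : HasSum b S := hb.hasSum
  -- Cauchy product: S * S = 1/(1-x)
  have h1x : (0:ℝ) < 1 - x := by have := abs_lt.mp hx; linarith [this.2]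
  have hSS : S * S = (1 - x)⁻¹ := by
    rw [hS_def, tsum_mul_tsum_eq_tsum_sum_range_of_summable_norm hnorm hnorm]
    have hterm : ∀ n : ℕ, ∑ k ∈ range (n+1), b k * b (n-k) = x ^ n := by
      intro n
      have : ∀ k ∈ range (n+1), b k * b (n-k)
          = (Nat.centralBinom k : ℝ) * Nat.centralBinom (n-k) / 4 ^ n * x ^ n := by
        intro k hk
        have hkn : k ≤ n := Nat.lt_succ_iff.mp (mem_range.mp hk)
        have hadd : k + (n - k) = n := Nat.add_sub_cancel' hkn
        have h4 : (4:ℝ) ^ n = 4 ^ k * 4 ^ (n-k) := by rw [← pow_add, hadd]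
        have hxp : x ^ n = x ^ k * x ^ (n-k) := by rw [← pow_add, hadd]
        simp only [hb_def]
        rw [h4, hxp]
        ring
      rw [Finset.sum_congr rfl this, ← Finset.sum_mul, ← Finset.sum_div, cb_conv n]
      rw [div_self (by positivity), one_mul]
    rw [tsum_congr hterm]
    exact tsum_geometric_of_norm_lt_one (by rwa [Real.norm_eq_abs])
  -- positivity of S by pairing consecutive terms
  have hE : Summable fun k => b (2*k) := hb.comp_injective (fun a b h => by omega)
  have hO : Summable fun k => b (2*k+1) := hb.comp_injective (fun a b h => by omega)
  have hpair : HasSum (fun k => b (2*k) + b (2*k+1))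
      ((∑' k, b (2*k)) + ∑' k, b (2*k+1)) := hE.hasSum.add hO.hasSum
  have hEO : HasSum b ((∑' k, b (2*k)) + ∑' k, b (2*k+1)) :=
    hE.hasSum.even_add_odd hO.hasSum
  have hx1 : -1 < x := (abs_lt.mp hx).1
  have hpos : ∀ k : ℕ, (0:ℝ) ≤ b (2*k) + b (2*k+1) := by
    intro k
    set A : ℝ := (Nat.centralBinom (2*k) : ℝ) / 4 ^ (2*k) with hA
    set B : ℝ := (Nat.centralBinom (2*k+1) : ℝ) / 4 ^ (2*k+1) with hB
    have hBpos : 0 < B := by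
      apply div_pos _ (by positivity)
      exact_mod_cast Nat.centralBinom_pos _
    have hBA : B ≤ A := by
      rw [hA, hB, div_le_div_iff₀ (by positivity) (by positivity), pow_succ]
      have h := cb_succ_le (2*k)
      have h4 : (0:ℝ) < 4 ^ (2*k) := by positivity
      nlinarith
    have ht : (0:ℝ) ≤ x ^ (2*k) := by
      rw [two_mul, pow_add]; exact mul_self_nonneg _
    have heq : b (2*k) + b (2*k+1) = x ^ (2*k) * A + x ^ (2*k) * x * B := by
      simp only [hb_def, hA, hB, pow_succ]
      ring
    rw [heq]
    nlinarith [mul_nonneg (mul_nonneg ht hBpos.le) (by linarith : (0:ℝ) ≤ x + 1),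
      mul_nonneg ht (sub_nonneg.mpr hBA)]
  have h0 : (0:ℝ) < b (2*0) + b (2*0+1) := by
    have hb0 : b 0 = 1 := by simp [hb_def]
    have hb1 : b 1 = x / 2 := by
      simp only [hb_def]
      norm_num [Nat.centralBinom]
      ring
    norm_num [hb0, hb1]
    linarith
  have hSpos : 0 < S := by
    rw [hS.unique hEO]
    exact hasSum_lt (f := fun _ : ℕ => (0:ℝ)) (i := 0) hpos h0 hasSum_zero hpair
  -- identify S with (sqrt (1-x))⁻¹
  have hsq : (Real.sqrt (1-x) * S) ^ 2 = 1 := by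
    rw [mul_pow, Real.sq_sqrt h1x.le, sq, ← mul_assoc]
    rw [mul_assoc, hSS, mul_inv_cancel₀ (ne_of_gt h1x)]
  have hconc : Real.sqrt (1-x) * S = 1 := by
    have hpos2 : 0 < Real.sqrt (1-x) * S := mul_pos (Real.sqrt_pos.mpr h1x) hSpos
    have hfac : (Real.sqrt (1-x) * S - 1) * (Real.sqrt (1-x) * S + 1) = 0 := by
      linear_combination hsq
    rcases mul_eq_zero.mp hfac with h | h
    · linarith
    · linarith
  rw [inv_eq_of_mul_eq_one_right hconc]
  exact hS

/-- Power series of the genus-one free-energy derivative `ℰ₂` of the quartic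
matrix model: for `-1/12 < u < 1/12`, `u ≠ 0`,
`(1/2) Σ_{j≥0} (-1)^(j+1) 12^j (1 - (2j+2)!/(4^(j+1)((j+1)!)²)) u^j
  = (1 - √(1 + 12u))/(24u(1 + 12u))`. -/
theorem genus_one_free_energy_series (u : ℝ)
    (h1 : -1 / 12 < u) (h2 : u < 1 / 12) (hu : u ≠ 0) :
    HasSum
      (fun j : ℕ => (1 / 2 : ℝ) * ((-1 : ℝ) ^ (j + 1) * 12 ^ j *
        (1 - (Nat.factorial (2 * j + 2) : ℝ) /
          (4 ^ (j + 1) * ((Nat.factorial (j + 1) : ℝ)) ^ 2)) * u ^ j))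
      ((1 - Real.sqrt (1 + 12 * u)) / (24 * u * (1 + 12 * u))) := by
  set x : ℝ := -(12*u) with hxdef
  have hx : |x| < 1 := by rw [hxdef, abs_lt]; constructor <;> linarith
  have hx0 : x ≠ 0 := neg_ne_zero.mpr (mul_ne_zero (by norm_num) hu)
  have h1x : 1 - x = 1 + 12*u := by rw [hxdef]; ring
  have hw : (0:ℝ) < 1 + 12*u := by linarith
  have hgeo : HasSum (fun j : ℕ => x ^ j) (1-x)⁻¹ :=
    hasSum_geometric_of_norm_lt_one (by rwa [Real.norm_eq_abs])
  have hcb := cb_hasSum hx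
  have hshift : HasSum
      (fun j : ℕ => (Nat.centralBinom (j+1) : ℝ)/4^(j+1) * x^(j+1))
      ((Real.sqrt (1-x))⁻¹ - 1) := by
    refine (hasSum_nat_add_iff (f := fun n => (Nat.centralBinom n : ℝ)/4^n * x^n) 1).mpr ?_
    convert hcb using 1
    · rfl
    simp [Nat.centralBinom]
  have hmain := (hgeo.mul_left (-(1/2))).add (hshift.mul_left ((1/2)*x⁻¹))
  convert hmain using 1
  · rfl
  · funext j
    have hc : ((2*j+2).factorial : ℝ) = (Nat.centralBinom (j+1):ℝ) * ((j+1).factorial)^2 := by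
      have h := Nat.choose_mul_factorial_mul_factorial
        (show j+1 ≤ 2*(j+1) by omega)
      have h3 : 2*(j+1)-(j+1) = j+1 := by omega
      rw [h3, mul_assoc] at h
      have h2 : Nat.centralBinom (j+1) * ((j+1).factorial * (j+1).factorial)
          = (2*(j+1)).factorial := h
      have h4 : 2*(j+1) = 2*j+2 := by omega
      rw [h4] at h2
      have := congrArg (Nat.cast : ℕ → ℝ) h2
      push_cast at this
      rw [← this]; ring
    have hfac : (Nat.factorial (2*j+2) : ℝ) / (4^(j+1) * ((Nat.factorial (j+1):ℝ))^2)
        = (Nat.centralBinom (j+1):ℝ)/4^(j+1) := by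
      rw [hc]
      have hne : ((Nat.factorial (j+1):ℝ)) ≠ 0 := by positivity
      field_simp
    rw [hfac, hxdef]
    have hppow : (-(12*u))^j = (-1:ℝ)^j * 12^j * u^j := by
      rw [show -(12*u) = (-1) * (12*u) by ring, mul_pow, mul_pow]; ring
    rw [pow_succ, hppow]
    field_simp
    rw [show (-(12*u))^(j+1) = (-(12*u))^j * (-(12*u)) from pow_succ _ _, hppow]
    ring
  · rw [h1x, hxdef]
    set s := Real.sqrt (1+12*u) with hs_def
    have hs : 0 < s := Real.sqrt_pos.mpr hw
    have hs2 : s^2 = 1 + 12*u := Real.sq_sqrt hw.le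
    rw [← hs2]
    field_simp
    linear_combination (-24) * hs2
end

section
/- Define M_j = 12^j·(2j+2)!·(28j+37)/(360·(j+1)·(j−1)!) − 13·j·(j+1)·j!·48^{j−1} for integers j ≥ 1. Then M_j/(48^{j+1}·(j+1)!·(j+1)^{3/2}) tends to 7/(1080·√π) as j → ∞. -/
open Filter

private lemma centralBinom_sqrt_tendsto :
    Tendsto (fun n : ℕ => (Nat.centralBinom n : ℝ) * Real.sqrt n / 4 ^ n) atTop
      (nhds (Real.sqrt Real.pi)⁻¹) := by
  have hsπ : Real.sqrt Real.pi ≠ 0 := by positivity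
  have h2 : Tendsto (fun n : ℕ => Stirling.stirlingSeq (2 * n)) atTop
      (nhds (Real.sqrt Real.pi)) :=
    Stirling.tendsto_stirlingSeq_sqrt_pi.comp
      (tendsto_atTop_mono (fun n => by simp only [id_eq]; omega) tendsto_id)
  have hdiv : Tendsto (fun n : ℕ => Stirling.stirlingSeq (2 * n) / Stirling.stirlingSeq n ^ 2)
      atTop (nhds (Real.sqrt Real.pi)⁻¹) := by
    have h := h2.div (Stirling.tendsto_stirlingSeq_sqrt_pi.pow 2) (pow_ne_zero 2 hsπ)
    convert h using 2
    · rfl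
    rw [sq]
    field_simp
  refine hdiv.congr' ?_
  filter_upwards [eventually_ge_atTop 1] with n hn
  have hn0 : (0 : ℝ) < n := by exact_mod_cast hn
  have hfac : ((2 * n).factorial : ℝ) =
      (Nat.centralBinom n : ℝ) * n.factorial * n.factorial := by
    have h := Nat.choose_mul_factorial_mul_factorial (show n ≤ 2 * n by omega)
    rw [show 2 * n - n = n by omega] at h
    have h2 := congrArg (fun m : ℕ => (m : ℝ)) h
    push_cast at h2
    rw [← h2, Nat.centralBinom]
  simp only [Stirling.stirlingSeq]
  push_cast
  rw [hfac]
  rw [show Real.sqrt (2 * (2 * (n : ℝ))) = 2 * Real.sqrt n by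
    rw [show (2 : ℝ) * (2 * (n : ℝ)) = 4 * n by ring,
      Real.sqrt_mul (by norm_num : (0:ℝ) ≤ 4),
      show Real.sqrt 4 = 2 by
        rw [show (4 : ℝ) = 2 ^ 2 by norm_num, Real.sqrt_sq (by norm_num : (0:ℝ) ≤ 2)]]]
  rw [div_pow ((n.factorial : ℝ)) (Real.sqrt (2 * (n : ℝ)) * ((n : ℝ) / Real.exp 1) ^ n) 2,
    mul_pow, Real.sq_sqrt (by positivity : (0:ℝ) ≤ 2 * (n : ℝ))]
  rw [show (4 : ℝ) ^ n = 2 ^ (2 * n) by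
    rw [show (4 : ℝ) = 2 ^ 2 by norm_num, ← pow_mul]]
  obtain ⟨S, hS0, hSx⟩ : ∃ S : ℝ, 0 < S ∧ (n : ℝ) = S ^ 2 :=
    ⟨Real.sqrt n, Real.sqrt_pos.mpr hn0, (Real.sq_sqrt hn0.le).symm⟩
  rw [hSx, Real.sqrt_sq hS0.le]
  have hF : (n.factorial : ℝ) ≠ 0 := by exact_mod_cast n.factorial_ne_zero
  have he : Real.exp 1 ≠ 0 := Real.exp_ne_zero 1
  field_simp
  ring_nf

/-- Asymptotics of the number `M_j = 𝒩_{j+1}(2)` of connected labeled 4-valent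
graphs with `j+1` vertices on a genus-two surface (and not on lower genus):
`M_j/(48^(j+1)·(j+1)!·(j+1)^(3/2)) → 7/(1080√π)` as `j → ∞`. -/
theorem genus_two_graph_count_asymptotics :
    Tendsto
      (fun j : ℕ =>
        (12 ^ j * (Nat.factorial (2 * j + 2) : ℝ) * (28 * (j : ℝ) + 37) /
            (360 * ((j : ℝ) + 1) * (Nat.factorial (j - 1) : ℝ)) -
          13 * (j : ℝ) * ((j : ℝ) + 1) * (Nat.factorial j : ℝ) * 48 ^ (j - 1)) /
          (48 ^ (j + 1) * (Nat.factorial (j + 1) : ℝ) * ((j : ℝ) + 1) ^ ((3 : ℝ) / 2)))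
      atTop (nhds (7 / (1080 * Real.sqrt Real.pi))) := by
  have hsπ : Real.sqrt Real.pi ≠ 0 := by positivity
  have hinv : Tendsto (fun j : ℕ => ((j : ℝ) + 1)⁻¹) atTop (nhds 0) := by
    simpa [one_div] using tendsto_one_div_add_atTop_nhds_zero_nat (𝕜 := ℝ)
  have hone : Tendsto (fun j : ℕ => 1 / (j : ℝ)) atTop (nhds 0) :=
    tendsto_one_div_atTop_nhds_zero_nat
  have hinvsqrt : Tendsto (fun j : ℕ => (Real.sqrt ((j : ℝ) + 1))⁻¹) atTop (nhds 0) := by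
    have h := (Real.continuous_sqrt.tendsto 0).comp hinv
    rw [Real.sqrt_zero] at h
    refine h.congr fun j => ?_
    simp [Function.comp, Real.sqrt_inv]
  have hq1 : Tendsto (fun j : ℕ => (28 * (j : ℝ) + 37) * (j : ℝ) / (4320 * ((j : ℝ) + 1) ^ 2))
      atTop (nhds (7 / 1080)) := by
    have h : Tendsto (fun j : ℕ => (28 + 37 * (1 / (j : ℝ))) * (1 - ((j : ℝ) + 1)⁻¹) ^ 2 / 4320)
        atTop (nhds (7 / 1080)) := by
      have h' := (((tendsto_const_nhds (α := ℕ) (x := (28:ℝ))).add (hone.const_mul 37)).mul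
        (((tendsto_const_nhds (α := ℕ) (x := (1:ℝ))).sub hinv).pow 2)).div_const (4320 : ℝ)
      convert h' using 2 <;> norm_num
    refine h.congr' ?_
    filter_upwards [eventually_ge_atTop 1] with j hj
    have hj0 : (j : ℝ) ≠ 0 := Nat.cast_ne_zero.mpr (by omega)
    have hj1 : ((j : ℝ) + 1) ≠ 0 := by positivity
    field_simp
    ring
  have hq2 : Tendsto (fun j : ℕ => 13 * (j : ℝ) / (2304 * ((j : ℝ) + 1)))
      atTop (nhds (13 / 2304)) := by
    have h : Tendsto (fun j : ℕ => 13 * (1 - ((j : ℝ) + 1)⁻¹) / 2304)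
        atTop (nhds (13 / 2304)) := by
      have h' := (((tendsto_const_nhds (α := ℕ) (x := (1:ℝ))).sub hinv).const_mul (13 : ℝ)).div_const (2304 : ℝ)
      convert h' using 2 <;> norm_num
    refine h.congr fun j => ?_
    have hj1 : ((j : ℝ) + 1) ≠ 0 := by positivity
    rw [mul_sub, mul_one, sub_div]
    field_simp
    ring
  have hB : Tendsto (fun j : ℕ =>
      (Nat.centralBinom (j + 1) : ℝ) * Real.sqrt ((j : ℝ) + 1) / 4 ^ (j + 1))
      atTop (nhds (Real.sqrt Real.pi)⁻¹) := by
    have h := centralBinom_sqrt_tendsto.comp (tendsto_add_atTop_nat 1)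
    refine h.congr fun j => ?_
    simp only [Function.comp]
    push_cast
    ring
  have hg : Tendsto (fun j : ℕ =>
      (28 * (j : ℝ) + 37) * (j : ℝ) / (4320 * ((j : ℝ) + 1) ^ 2) *
        ((Nat.centralBinom (j + 1) : ℝ) * Real.sqrt ((j : ℝ) + 1) / 4 ^ (j + 1)) -
      13 * (j : ℝ) / (2304 * ((j : ℝ) + 1)) * (Real.sqrt ((j : ℝ) + 1))⁻¹)
      atTop (nhds (7 / (1080 * Real.sqrt Real.pi))) := by
    have h := (hq1.mul hB).sub (hq2.mul hinvsqrt)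
    rw [mul_zero, sub_zero] at h
    rw [show (7 : ℝ) / (1080 * Real.sqrt Real.pi) = 7 / 1080 * (Real.sqrt Real.pi)⁻¹ by
      rw [div_mul_eq_div_div, div_eq_mul_inv]]
    exact h
  refine hg.congr' ?_
  filter_upwards [eventually_ge_atTop 1] with j hj
  obtain ⟨k, rfl⟩ : ∃ k, j = k + 1 := ⟨j - 1, by omega⟩
  simp only [Nat.add_sub_cancel]
  rw [show 2 * (k + 1) + 2 = 2 * (k + 2) by ring, show k + 1 + 1 = k + 2 from rfl]
  have hc : ((2 * (k + 2)).factorial : ℝ) =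
      (Nat.centralBinom (k + 2) : ℝ) * ((k + 2).factorial : ℝ) * ((k + 2).factorial : ℝ) := by
    have h := Nat.choose_mul_factorial_mul_factorial (show k + 2 ≤ 2 * (k + 2) by omega)
    rw [show 2 * (k + 2) - (k + 2) = k + 2 by omega] at h
    have h2 := congrArg (fun m : ℕ => (m : ℝ)) h
    push_cast at h2
    rw [← h2, Nat.centralBinom]
  have hf2 : (((k + 2).factorial : ℝ)) = ((k : ℝ) + 2) * ((k : ℝ) + 1) * (k.factorial : ℝ) := by
    rw [show k + 2 = (k + 1) + 1 from rfl, Nat.factorial_succ, Nat.factorial_succ]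
    push_cast
    ring
  have hf1 : (((k + 1).factorial : ℝ)) = ((k : ℝ) + 1) * (k.factorial : ℝ) := by
    rw [Nat.factorial_succ]
    push_cast
    ring
  push_cast
  rw [hc, hf2, hf1]
  rw [show ((k : ℝ) + 1 + 1) = (k : ℝ) + 2 by ring]
  rw [show (48 : ℝ) ^ (k + 2) = 2304 * (4 ^ k * 12 ^ k) by
      rw [pow_succ, pow_succ, show (48 : ℝ) = 4 * 12 by norm_num, mul_pow]; ring,
    show (48 : ℝ) ^ k = 4 ^ k * 12 ^ k by
      rw [show (48 : ℝ) = 4 * 12 by norm_num, mul_pow],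
    show (12 : ℝ) ^ (k + 1) = 12 * 12 ^ k by rw [pow_succ]; ring,
    show (4 : ℝ) ^ (k + 2) = 16 * 4 ^ k by rw [pow_succ, pow_succ]; ring]
  rw [show ((k : ℝ) + 2) ^ ((3 : ℝ) / 2) = ((k : ℝ) + 2) * Real.sqrt ((k : ℝ) + 2) by
    rw [show (3 : ℝ) / 2 = 1 + 1 / 2 by norm_num,
      Real.rpow_add (by positivity : (0 : ℝ) < (k : ℝ) + 2), Real.rpow_one,
      ← Real.sqrt_eq_rpow]]
  set S := Real.sqrt ((k : ℝ) + 2) with hS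
  have hS0 : 0 < S := Real.sqrt_pos.mpr (by positivity)
  have hx : (k : ℝ) = S ^ 2 - 2 := by
    rw [hS, Real.sq_sqrt (by positivity : (0 : ℝ) ≤ (k : ℝ) + 2)]; ring
  rw [hx]
  rw [show S ^ 2 - 2 + 2 = S ^ 2 by ring, show S ^ 2 - 2 + 1 = S ^ 2 - 1 by ring]
  have hk2 : S ^ 2 = (k : ℝ) + 2 := by
    rw [hS, Real.sq_sqrt (by positivity : (0 : ℝ) ≤ (k : ℝ) + 2)]
  have hS1 : S ^ 2 - 1 ≠ 0 := by
    have hk0 : (0 : ℝ) ≤ (k : ℝ) := Nat.cast_nonneg k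
    have : (0 : ℝ) < S ^ 2 - 1 := by rw [hk2]; linarith
    exact this.ne'
  have hF : (k.factorial : ℝ) ≠ 0 := by exact_mod_cast k.factorial_ne_zero
  have h4 : ((4 : ℝ) ^ k) ≠ 0 := by positivity
  have h12 : ((12 : ℝ) ^ k) ≠ 0 := by positivity
  field_simp
  ring
end

section
/- Define M_j = (16·48^j·(j+3)!/(3·j!))·((2741/10)·(j+5)! − (291/10)·j·(j+4)! − (2741/1260)·(2j+9)!/(4^j·(j+4)!) − (292·j·(2j+7)!)/(315·4^j·(j+3)!)) for integers j ≥ 1. Then M_j/(48^{j+4}·(j+4)!·(j+4)^4) tends to 245/995328 as j → ∞. -/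
open Filter

lemma cb_sq (n : ℕ) : Nat.centralBinom n ^ 2 * (2*n+1) ≤ 16 ^ n := by
  induction n with
  | zero => simp [Nat.centralBinom]
  | succ n ih =>
    have h := Nat.succ_mul_centralBinom_succ n
    have key : (n+1)^2 * (Nat.centralBinom (n+1) ^ 2 * (2*(n+1)+1)) ≤ (n+1)^2 * 16^(n+1) := by
      have e : (n+1)^2 * (Nat.centralBinom (n+1) ^ 2 * (2*(n+1)+1)) =
          (2*(2*n+1)*Nat.centralBinom n)^2 * (2*n+3) := by
        rw [← h]; ring
      rw [e]
      have e2 : (2*(2*n+1)*Nat.centralBinom n)^2 * (2*n+3)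
          = 4*(2*n+1)*(2*n+3) * (Nat.centralBinom n ^2 * (2*n+1)) := by ring
      rw [e2]
      calc 4*(2*n+1)*(2*n+3) * (Nat.centralBinom n ^2 * (2*n+1))
          ≤ 4*(2*n+1)*(2*n+3) * 16^n := Nat.mul_le_mul_left _ ih
        _ ≤ (16*(n+1)^2) * 16^n := Nat.mul_le_mul_right _ (by nlinarith)
        _ = (n+1)^2 * 16^(n+1) := by rw [pow_succ]; ring
    exact Nat.le_of_mul_le_mul_left key (by positivity)

noncomputable def qq (n : ℕ) : ℝ := (Nat.centralBinom n : ℝ) / 4 ^ n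

lemma qq_nonneg (n : ℕ) : 0 ≤ qq n := by unfold qq; positivity

lemma qq_sq_le (n : ℕ) : qq n ^ 2 ≤ 1 / (2*(n:ℝ)+1) := by
  have h := cb_sq n
  have h' : ((Nat.centralBinom n : ℝ))^2 * (2*(n:ℝ)+1) ≤ 16 ^ n := by exact_mod_cast h
  have h16 : (16:ℝ)^n = (4^n)^2 := by
    rw [show (16:ℝ) = 4^2 by norm_num, ← pow_mul, ← pow_mul, mul_comm]
  rw [qq, div_pow, div_le_div_iff₀ (by positivity) (by positivity)]
  rw [h16] at h'
  nlinarith [pow_pos (by norm_num : (0:ℝ) < 4) n]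

lemma qq_tendsto : Tendsto qq atTop (nhds 0) := by
  have h1 : Tendsto (fun n : ℕ => qq n ^ 2) atTop (nhds 0) := by
    apply squeeze_zero (fun n => by positivity) qq_sq_le
    apply Tendsto.div_atTop tendsto_const_nhds
    apply tendsto_atTop_add_const_right
    exact (tendsto_natCast_atTop_atTop).const_mul_atTop (by norm_num)
  have h2 : Tendsto (fun n : ℕ => Real.sqrt (qq n ^ 2)) atTop (nhds 0) := by
    have := (Real.continuous_sqrt.tendsto 0).comp h1
    simpa [Function.comp_def] using this
  refine h2.congr fun n => ?_
  exact Real.sqrt_sq (qq_nonneg n)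

lemma linr (a : ℝ) : Tendsto (fun j : ℕ => ((j:ℝ)+a)/((j:ℝ)+4)) atTop (nhds 1) := by
  have h1 : Tendsto (fun j : ℕ => (j:ℝ)+4) atTop atTop :=
    tendsto_atTop_add_const_right _ _ tendsto_natCast_atTop_atTop
  have h2 : Tendsto (fun j : ℕ => (a-4)/((j:ℝ)+4)) atTop (nhds 0) :=
    Tendsto.div_atTop tendsto_const_nhds h1
  have h3 : Tendsto (fun j : ℕ => 1 + (a-4)/((j:ℝ)+4)) atTop (nhds (1+0)) :=
    tendsto_const_nhds.add h2
  rw [add_zero] at h3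
  refine h3.congr' ?_
  filter_upwards [eventually_gt_atTop 0] with j hj
  have : ((j:ℝ)+4) ≠ 0 := by positivity
  field_simp
  try ring

lemma hA_tendsto : Tendsto (fun j : ℕ =>
    (((j:ℝ)+1)*((j:ℝ)+2)*((j:ℝ)+3)*((j:ℝ)+5))/((j:ℝ)+4)^4) atTop (nhds 1) := by
  have h := (((linr 1).mul (linr 2)).mul ((linr 3).mul (linr 5)))
  norm_num at h
  refine h.congr fun j => ?_
  have hx : ((j:ℝ)+4) ≠ 0 := by positivity
  field_simp
  try ring

lemma hB_tendsto : Tendsto (fun j : ℕ =>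
    ((j:ℝ)*((j:ℝ)+1)*((j:ℝ)+2)*((j:ℝ)+3))/((j:ℝ)+4)^4) atTop (nhds 1) := by
  have h := (((linr 0).mul (linr 1)).mul ((linr 2).mul (linr 3)))
  norm_num at h
  refine h.congr fun j => ?_
  have hx : ((j:ℝ)+4) ≠ 0 := by positivity
  field_simp
  try ring

/-- Asymptotics of the number `M_j = 𝒩_{j+4}(3)` of connected labeled 4-valent
graphs with `j+4` vertices on a genus-three surface (and not on lower genus):
`M_j/(48^(j+4)·(j+4)!·(j+4)⁴) → 245/995328` as `j → ∞`. -/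
theorem genus_three_graph_count_asymptotics :
    Tendsto
      (fun j : ℕ =>
        (16 * 48 ^ j * (Nat.factorial (j + 3) : ℝ) / (3 * (Nat.factorial j : ℝ))) *
          ((2741 / 10) * (Nat.factorial (j + 5) : ℝ) -
            (291 / 10) * (j : ℝ) * (Nat.factorial (j + 4) : ℝ) -
            (2741 / 1260) * (Nat.factorial (2 * j + 9) : ℝ) /
              (4 ^ j * (Nat.factorial (j + 4) : ℝ)) -
            (292 * (j : ℝ) * (Nat.factorial (2 * j + 7) : ℝ)) /
              (315 * 4 ^ j * (Nat.factorial (j + 3) : ℝ))) /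
          (48 ^ (j + 4) * (Nat.factorial (j + 4) : ℝ) * ((j : ℝ) + 4) ^ 4))
      atTop (nhds (245 / 995328)) := by
  have hq5 : Tendsto (fun j : ℕ => qq (j+5)) atTop (nhds 0) :=
    qq_tendsto.comp (tendsto_add_atTop_nat 5)
  have hq4 : Tendsto (fun j : ℕ => qq (j+4)) atTop (nhds 0) :=
    qq_tendsto.comp (tendsto_add_atTop_nat 4)
  have hg : Tendsto (fun j : ℕ =>
      (1/995328 : ℝ) * ((2741/10) * ((((j:ℝ)+1)*((j:ℝ)+2)*((j:ℝ)+3)*((j:ℝ)+5))/((j:ℝ)+4)^4)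
        - (291/10) * (((j:ℝ)*((j:ℝ)+1)*((j:ℝ)+2)*((j:ℝ)+3))/((j:ℝ)+4)^4)
        - (2741*512/1260) * ((((j:ℝ)+1)*((j:ℝ)+2)*((j:ℝ)+3)*((j:ℝ)+5))/((j:ℝ)+4)^4 * qq (j+5))
        - (292*128/315) * (((j:ℝ)*((j:ℝ)+1)*((j:ℝ)+2)*((j:ℝ)+3))/((j:ℝ)+4)^4 * qq (j+4))))
      atTop (nhds ((1/995328 : ℝ) * ((2741/10)*1 - (291/10)*1
        - (2741*512/1260)*(1*0) - (292*128/315)*(1*0)))) := by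
    exact ((((hA_tendsto.const_mul _).sub (hB_tendsto.const_mul _)).sub
      ((hA_tendsto.mul hq5).const_mul _)).sub
      ((hB_tendsto.mul hq4).const_mul _)).const_mul _
  have hval : ((1/995328 : ℝ) * ((2741/10)*1 - (291/10)*1
        - (2741*512/1260)*(1*0) - (292*128/315)*(1*0))) = 245/995328 := by norm_num
  rw [hval] at hg
  refine hg.congr fun j => ?_
  -- now prove g j = f j
  have hf : ∀ m : ℕ, (Nat.factorial m : ℝ) ≠ 0 :=
    fun m => Nat.cast_ne_zero.mpr (Nat.factorial_ne_zero m)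
  have hc5 : Nat.centralBinom (j+5) * Nat.factorial (j+5) * Nat.factorial (j+5)
      = Nat.factorial (2*j+10) := by
    have h := Nat.choose_mul_factorial_mul_factorial
      (show (j+5) ≤ 2*(j+5) by omega)
    rw [show 2*(j+5) = 2*j+10 by ring] at h
    simpa [Nat.centralBinom, show 2*j+10-(j+5) = j+5 by omega,
      show 2*(j+5) = 2*j+10 by ring] using h
  have hc4 : Nat.centralBinom (j+4) * Nat.factorial (j+4) * Nat.factorial (j+4)
      = Nat.factorial (2*j+8) := by
    have h := Nat.choose_mul_factorial_mul_factorial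
      (show (j+4) ≤ 2*(j+4) by omega)
    rw [show 2*(j+4) = 2*j+8 by ring] at h
    simpa [Nat.centralBinom, show 2*j+8-(j+4) = j+4 by omega,
      show 2*(j+4) = 2*j+8 by ring] using h
  have hc5R : (Nat.centralBinom (j+5) : ℝ) * (Nat.factorial (j+5) : ℝ) * (Nat.factorial (j+5) : ℝ)
      = (Nat.factorial (2*j+10) : ℝ) := by exact_mod_cast congrArg (Nat.cast : ℕ → ℝ) hc5
  have hc4R : (Nat.centralBinom (j+4) : ℝ) * (Nat.factorial (j+4) : ℝ) * (Nat.factorial (j+4) : ℝ)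
      = (Nat.factorial (2*j+8) : ℝ) := by exact_mod_cast congrArg (Nat.cast : ℕ → ℝ) hc4
  have ecb5 : (Nat.centralBinom (j+5) : ℝ)
      = (Nat.factorial (2*j+10) : ℝ) / ((Nat.factorial (j+5) : ℝ) * (Nat.factorial (j+5) : ℝ)) := by
    rw [eq_div_iff (mul_ne_zero (hf _) (hf _)), ← hc5R]; ring
  have ecb4 : (Nat.centralBinom (j+4) : ℝ)
      = (Nat.factorial (2*j+8) : ℝ) / ((Nat.factorial (j+4) : ℝ) * (Nat.factorial (j+4) : ℝ)) := by
    rw [eq_div_iff (mul_ne_zero (hf _) (hf _)), ← hc4R]; ring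
  have e3 : Nat.factorial (j+3) = (j+3)*(j+2)*(j+1)*Nat.factorial j := by
    simp [Nat.factorial_succ]; try ring
  have e4 : Nat.factorial (j+4) = (j+4)*(j+3)*(j+2)*(j+1)*Nat.factorial j := by
    simp [Nat.factorial_succ]; try ring
  have e5 : Nat.factorial (j+5) = (j+5)*(j+4)*(j+3)*(j+2)*(j+1)*Nat.factorial j := by
    simp [Nat.factorial_succ]; try ring
  have e9 : Nat.factorial (2*j+9) = (2*j+9)*(2*j+8)*Nat.factorial (2*j+7) := by
    simp [Nat.factorial_succ]; try ring
  have e10 : Nat.factorial (2*j+10) = (2*j+10)*(2*j+9)*(2*j+8)*Nat.factorial (2*j+7) := by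
    simp [Nat.factorial_succ]; try ring
  have e8 : Nat.factorial (2*j+8) = (2*j+8)*Nat.factorial (2*j+7) := by
    simp [Nat.factorial_succ]; try ring
  have hF : (Nat.factorial j : ℝ) ≠ 0 := hf j
  have hG : (Nat.factorial (2*j+7) : ℝ) ≠ 0 := hf _
  have h4 : (4:ℝ)^j ≠ 0 := by positivity
  have h48 : (48:ℝ)^j ≠ 0 := by positivity
  have hx : ((j:ℝ)+4) ≠ 0 := by positivity
  simp only [qq, ecb5, ecb4, e3, e4, e5, e9, e10, e8, pow_add]
  push_cast
  field_simp
  ring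
end
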